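/- Let r, s, k be natural numbers with k ≤ r and k ≤ s, and set n = r + s. Let θ, X : Fin k → ℝ with X_i ≠ 0 for all i, and t : Fin (n − 2k) → ℂ with ‖t_i‖ = 1 for all i. Define h : Fin n → ℂ by h_j = exp(iθ_j − X_j) for j < k, h_j = t_{j−k} for k ≤ j < n − k, and h_j = exp(iθ_{j−(n−k)} + X_{j−(n−k)}) for n − k ≤ j < n. Then the product P = ∏_{0 ≤ i < k} ∏_{k ≤ j < n−k} (1 − h_i · h_j⁻¹) · ∏_{k ≤ i < n−k} ∏_{n−k ≤ j < n} (1 − h_i · h_j⁻¹) is a real number and P > 0. -/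

import Mathlib

/-- For a regular element `h` of the Cartan subgroup `H'_{S_k}` of `U(r,s)`, the
determinant `det(Id − Ad(h))_{η'(S_k)} = ∏ (1 − h^{−α})` over the roots of the
nilradical is a positive real number (unnamed lemma of Section 6). -/
theorem det_nilradical_pos (r s k : ℕ) (hkr : k ≤ r) (hks : k ≤ s) (n : ℕ) (hn : n = r + s)
    (θ X : Fin k → ℝ) (hX : ∀ i, X i ≠ 0)
    (t : Fin (n - 2 * k) → ℂ) (ht : ∀ i, ‖t i‖ = 1)
    (h : Fin n → ℂ)
    (hh1 : ∀ j : Fin n, ∀ hj : (j : ℕ) < k,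
      h j = Complex.exp (Complex.I * (θ ⟨(j : ℕ), hj⟩ : ℂ) - (X ⟨(j : ℕ), hj⟩ : ℂ)))
    (hh2 : ∀ j : Fin n, ∀ (h1 : k ≤ (j : ℕ)) (h2 : (j : ℕ) < n - k),
      h j = t ⟨(j : ℕ) - k, by omega⟩)
    (hh3 : ∀ j : Fin n, ∀ h1 : n - k ≤ (j : ℕ),
      h j = Complex.exp (Complex.I * (θ ⟨(j : ℕ) - (n - k), by have := j.isLt; omega⟩ : ℂ)
        + (X ⟨(j : ℕ) - (n - k), by have := j.isLt; omega⟩ : ℂ))) :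
    ∃ c : ℝ, 0 < c ∧
      (∏ i ∈ Finset.univ.filter (fun i : Fin n => (i : ℕ) < k),
        ∏ j ∈ Finset.univ.filter (fun j : Fin n => k ≤ (j : ℕ) ∧ (j : ℕ) < n - k),
          (1 - h i * (h j)⁻¹)) *
      (∏ i ∈ Finset.univ.filter (fun i : Fin n => k ≤ (i : ℕ) ∧ (i : ℕ) < n - k),
        ∏ j ∈ Finset.univ.filter (fun j : Fin n => n - k ≤ (j : ℕ)),
          (1 - h i * (h j)⁻¹)) = (c : ℂ) := by
  classical
  have h2k : 2 * k ≤ n := by omega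
  set Em : Fin k → ℂ := fun a => Complex.exp (Complex.I * (θ a : ℂ) - (X a : ℂ)) with hEm
  set Ep : Fin k → ℂ := fun a => Complex.exp (Complex.I * (θ a : ℂ) + (X a : ℂ)) with hEp
  have hP1 :
      (∏ i ∈ Finset.univ.filter (fun i : Fin n => (i : ℕ) < k),
        ∏ j ∈ Finset.univ.filter (fun j : Fin n => k ≤ (j : ℕ) ∧ (j : ℕ) < n - k),
          (1 - h i * (h j)⁻¹))
      = ∏ a : Fin k, ∏ m : Fin (n - 2 * k), (1 - Em a * (t m)⁻¹) := by
    refine Finset.prod_bij' (fun i hi => (⟨(i : ℕ), by simpa using hi⟩ : Fin k))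
      (fun a _ => (⟨(a : ℕ), by have := a.isLt; omega⟩ : Fin n)) ?_ ?_ ?_ ?_ ?_
    · intros; simp
    · intro a _
      simp only [Finset.mem_filter, Finset.mem_univ, true_and]
      exact a.isLt
    · intro i hi; ext; simp
    · intro a _; ext; simp
    · intro i hi
      have hik : (i : ℕ) < k := by simpa using hi
      rw [hh1 i hik]
      refine Finset.prod_bij'
        (fun j hj => (⟨(j : ℕ) - k, by simp only [Finset.mem_filter] at hj; omega⟩ :
          Fin (n - 2 * k)))
        (fun m _ => (⟨(m : ℕ) + k, by have := m.isLt; omega⟩ : Fin n)) ?_ ?_ ?_ ?_ ?_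
      · intros; simp
      · intro m _
        simp only [Finset.mem_filter, Finset.mem_univ, true_and]
        have := m.isLt; omega
      · intro j hj
        simp only [Finset.mem_filter, Finset.mem_univ, true_and] at hj
        ext; simp; omega
      · intro m _; ext; simp
      · intro j hj
        simp only [Finset.mem_filter, Finset.mem_univ, true_and] at hj
        rw [hh2 j hj.1 hj.2]
  have hP2 :
      (∏ i ∈ Finset.univ.filter (fun i : Fin n => k ≤ (i : ℕ) ∧ (i : ℕ) < n - k),
        ∏ j ∈ Finset.univ.filter (fun j : Fin n => n - k ≤ (j : ℕ)),
          (1 - h i * (h j)⁻¹))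
      = ∏ a : Fin k, ∏ m : Fin (n - 2 * k), (1 - t m * (Ep a)⁻¹) := by
    rw [Finset.prod_comm]
    refine Finset.prod_bij' (fun j hj => (⟨(j : ℕ) - (n - k), by
        simp only [Finset.mem_filter] at hj; have := j.isLt; omega⟩ : Fin k))
      (fun a _ => (⟨(a : ℕ) + (n - k), by have := a.isLt; omega⟩ : Fin n)) ?_ ?_ ?_ ?_ ?_
    · intros; simp
    · intro a _
      simp only [Finset.mem_filter, Finset.mem_univ, true_and]
      omega
    · intro j hj
      simp only [Finset.mem_filter, Finset.mem_univ, true_and] at hj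
      ext; simp; omega
    · intro a _; ext; simp
    · intro j hj
      simp only [Finset.mem_filter, Finset.mem_univ, true_and] at hj
      rw [hh3 j hj]
      refine Finset.prod_bij'
        (fun i hi => (⟨(i : ℕ) - k, by simp only [Finset.mem_filter] at hi; omega⟩ :
          Fin (n - 2 * k)))
        (fun m _ => (⟨(m : ℕ) + k, by have := m.isLt; omega⟩ : Fin n)) ?_ ?_ ?_ ?_ ?_
      · intros; simp
      · intro m _
        simp only [Finset.mem_filter, Finset.mem_univ, true_and]
        have := m.isLt; omega
      · intro i hi
        simp only [Finset.mem_filter, Finset.mem_univ, true_and] at hi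
        ext; simp; omega
      · intro m _; ext; simp
      · intro i hi
        simp only [Finset.mem_filter, Finset.mem_univ, true_and] at hi
        rw [hh2 i hi.1 hi.2]
  have key : ∀ (a : Fin k) (m : Fin (n - 2 * k)),
      (1 - Em a * (t m)⁻¹) * (1 - t m * (Ep a)⁻¹)
        = (Complex.normSq (1 - Em a * (t m)⁻¹) : ℂ) := by
    intro a m
    have htm : ‖t m‖ = 1 := by simpa using ht m
    have h1 : (starRingEnd ℂ) (Em a) = (Ep a)⁻¹ := by
      rw [hEm, hEp, ← Complex.exp_conj, ← Complex.exp_neg]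
      congr 1
      simp only [map_sub, map_add, map_mul, Complex.conj_I, Complex.conj_ofReal, neg_add]
      ring
    have h2 : (starRingEnd ℂ) ((t m)⁻¹) = t m := by
      rw [Complex.inv_eq_conj htm]
      simp
    have hconj : (starRingEnd ℂ) (1 - Em a * (t m)⁻¹) = 1 - t m * (Ep a)⁻¹ := by
      rw [map_sub, map_one, map_mul, h1, h2]; ring
    rw [← hconj, Complex.mul_conj]
  refine ⟨∏ a : Fin k, ∏ m : Fin (n - 2 * k), Complex.normSq (1 - Em a * (t m)⁻¹), ?_, ?_⟩
  · refine Finset.prod_pos fun a _ => Finset.prod_pos fun m _ => ?_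
    refine Complex.normSq_pos.mpr fun hz => ?_
    have hz1 : Em a * (t m)⁻¹ = 1 := (sub_eq_zero.mp hz).symm
    have htm : ‖t m‖ = 1 := by simpa using ht m
    have habs : ‖Em a * (t m)⁻¹‖ = 1 := by rw [hz1]; simp
    rw [norm_mul, norm_inv, htm, inv_one, mul_one, hEm] at habs
    rw [Complex.norm_exp] at habs
    have hre : (Complex.I * (θ a : ℂ) - (X a : ℂ)).re = -(X a) := by simp
    rw [hre] at habs
    have hx0 : -X a = 0 := Real.exp_injective (habs.trans Real.exp_zero.symm)
    exact hX a (by linarith)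
  · rw [hP1, hP2, ← Finset.prod_mul_distrib]
    push_cast
    refine Finset.prod_congr rfl fun a _ => ?_
    rw [← Finset.prod_mul_distrib]
    exact Finset.prod_congr rfl fun m _ => key a m
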